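/- Suppose f is a skip rule on pairs witnessing that A ⊕ A is not 0-weakly stochastic, i.e. the sequence of bits selected by f from A ⊕ A has upper density ρ̄ > 0. Define a skip rule g on A that selects position k whenever f selects position 2k or 2k+1 (skipping a repeated k). Then the upper density of the bits g selects from A is at least ρ̄/2. Consequently, if A is 0-weakly stochastic then so is A ⊕ A. -/

import Mathlib

open Filter Topology Classical

/-- `cnt A n = |A ∩ [0,n)|`. -/
noncomputable def cnt (A : Set ℕ) (n : ℕ) : ℕ :=
  ((Finset.range n).filter (· ∈ A)).card

/-- `dens A n = |A ∩ [0,n)| / n`, the density of `A` at `n`. -/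
noncomputable def dens (A : Set ℕ) (n : ℕ) : ℝ := (cnt A n : ℝ) / n

/-- A skip rule: given the finite history of (door, content) pairs observed so far,
it picks the next door, which must exceed the last door visited. -/
structure SkipRule where
  next : List (ℕ × Bool) → ℕ
  incr : ∀ (σ : List (ℕ × Bool)) (p : ℕ × Bool), next (σ ++ [p]) > p.1

/-- The history of the first `n` inspections of `A` by skip rule `R`. -/
noncomputable def SkipRule.hist (R : SkipRule) (A : Set ℕ) : ℕ → List (ℕ × Bool)
  | 0 => []
  | n + 1 =>
      R.hist A n ++ [(R.next (R.hist A n), decide (R.next (R.hist A n) ∈ A))]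

/-- The set of stages at which the bit selected by `R` from `A` is a `1`. -/
noncomputable def SkipRule.selSet (R : SkipRule) (A : Set ℕ) : Set ℕ :=
  {m | R.next (R.hist A m) ∈ A}

/-- `A` is 0-weakly stochastic: every computable skip rule selects from `A`
a sequence of bits with density of `1`s equal to `0`. -/
def WeaklyStochastic0 (A : Set ℕ) : Prop :=
  ∀ R : SkipRule, Computable R.next → Tendsto (dens (R.selSet A)) atTop (𝓝 0)

/-- `A ⊕ A = {2n : n ∈ A} ∪ {2n+1 : n ∈ A}`. -/
def oplus (A : Set ℕ) : Set ℕ :=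
  {m | ∃ n ∈ A, m = 2 * n} ∪ {m | ∃ n ∈ A, m = 2 * n + 1}

/-! ### Basic counting lemmas -/

lemma cnt_zero (S : Set ℕ) : cnt S 0 = 0 := by simp [cnt]

lemma cnt_succ (S : Set ℕ) (n : ℕ) :
    cnt S (n + 1) = cnt S n + (if n ∈ S then 1 else 0) := by
  simp only [cnt, Finset.range_add_one, Finset.filter_insert]
  split
  · rw [Finset.card_insert_of_notMem (by simp)]
  · simp

lemma cnt_mono (S : Set ℕ) : Monotone (cnt S) := fun _ _ h =>
  Finset.card_le_card (Finset.filter_subset_filter _ (Finset.range_subset_range.2 h))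

lemma cnt_le (S : Set ℕ) (n : ℕ) : cnt S n ≤ n :=
  (Finset.card_filter_le _ _).trans (by simp)

lemma dens_nonneg (S : Set ℕ) (n : ℕ) : 0 ≤ dens S n := by
  unfold dens; positivity

lemma dens_le_one (S : Set ℕ) (n : ℕ) : dens S n ≤ 1 := by
  unfold dens
  rcases Nat.eq_zero_or_pos n with h | h
  · simp [h]
  · rw [div_le_one (by exact_mod_cast h)]
    exact_mod_cast cnt_le S n

lemma mem_oplus {A : Set ℕ} {d : ℕ} : d ∈ oplus A ↔ d / 2 ∈ A := by
  constructor
  · rintro (⟨n, hn, rfl⟩ | ⟨n, hn, rfl⟩) <;> simpa [Nat.mul_add_div] using hn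
  · intro h
    rcases Nat.even_or_odd d with ⟨k, hk⟩ | ⟨k, hk⟩
    · exact Or.inl ⟨d / 2, h, by omega⟩
    · exact Or.inr ⟨d / 2, h, by omega⟩

/-! ### The simulated skip rule `gsr f` -/

/-- One simulation step: consume one bit `p = (k, b)` learned by `g` and extend `f`'s history
by the one or two doors of `f` whose half equals `k`. -/
def stepP (f : SkipRule) (τ : List (ℕ × Bool)) (p : ℕ × Bool) : List (ℕ × Bool) :=
  if f.next (τ ++ [(f.next τ, p.2)]) / 2 = p.1 then
    (τ ++ [(f.next τ, p.2)]) ++ [(f.next (τ ++ [(f.next τ, p.2)]), p.2)]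
  else τ ++ [(f.next τ, p.2)]

/-- Reconstruct `f`'s history from `g`'s history. -/
def ffrom (f : SkipRule) (σ : List (ℕ × Bool)) : List (ℕ × Bool) := σ.foldl (stepP f) []

lemma ffrom_concat (f : SkipRule) (σ : List (ℕ × Bool)) (p : ℕ × Bool) :
    ffrom f (σ ++ [p]) = stepP f (ffrom f σ) p := by
  simp [ffrom, List.foldl_append]

/-- One more than the last door of a history (0 for the empty history). -/
def rail (σ : List (ℕ × Bool)) : ℕ := ((σ[σ.length - 1]?).map (fun p => p.1 + 1)).getD 0

lemma rail_concat (σ : List (ℕ × Bool)) (p : ℕ × Bool) : rail (σ ++ [p]) = p.1 + 1 := by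
  simp [rail, List.getElem?_concat_length]

/-- The next door asked by the simulated rule. -/
def gnext (f : SkipRule) (σ : List (ℕ × Bool)) : ℕ := max (f.next (ffrom f σ) / 2) (rail σ)

/-- The simulated skip rule on `A` derived from a skip rule `f` on `A ⊕ A`. -/
def gsr (f : SkipRule) : SkipRule :=
  ⟨gnext f, fun σ p => by simp only [gnext, rail_concat]; omega⟩

lemma f_incr (f : SkipRule) (A : Set ℕ) (m : ℕ) :
    f.next (f.hist A (m + 1)) > f.next (f.hist A m) := by
  have := f.incr (f.hist A m) (f.next (f.hist A m), decide (f.next (f.hist A m) ∈ A))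
  simpa [SkipRule.hist] using this

/-! ### The key simulation invariant -/

theorem key (f : SkipRule) (A : Set ℕ) : ∀ n : ℕ, ∃ m : ℕ,
    ffrom f ((gsr f).hist A n) = f.hist (oplus A) m ∧ n ≤ m ∧ m ≤ 2 * n ∧
    cnt (f.selSet (oplus A)) m ≤ 2 * cnt ((gsr f).selSet A) n ∧
    gnext f ((gsr f).hist A n) = f.next (f.hist (oplus A) m) / 2 := by
  intro n
  induction n with
  | zero =>
      refine ⟨0, rfl, le_refl 0, by omega, by simp [cnt_zero], ?_⟩
      simp [gnext, rail, SkipRule.hist, ffrom]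
  | succ n ih =>
      obtain ⟨m, hfe, h1, h2, h3, h4⟩ := ih
      set B := oplus A with hB
      set Hg := (gsr f).hist A n with hHg
      set K := gnext f Hg with hK
      set d := f.next (f.hist B m) with hd
      have hist_g : (gsr f).hist A (n + 1) = Hg ++ [(K, decide (K ∈ A))] := rfl
      have hrail : rail ((gsr f).hist A (n + 1)) = K + 1 := by rw [hist_g, rail_concat]
      have hdK : d / 2 = K := h4.symm
      have hbit : decide (K ∈ A) = decide (d ∈ B) := by
        simp only [hB, mem_oplus, hdK]
      have hist_f1 : f.hist B (m + 1) = f.hist B m ++ [(d, decide (d ∈ B))] := rfl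
      set d' := f.next (f.hist B (m + 1)) with hd'
      have hdd' : d' > d := f_incr f B m
      have hmem_g : n ∈ (gsr f).selSet A ↔ K ∈ A := Iff.rfl
      have hmem_f : m ∈ f.selSet B ↔ K ∈ A := by
        show d ∈ oplus A ↔ K ∈ A
        rw [mem_oplus, hdK]
      have hgc : cnt ((gsr f).selSet A) (n + 1)
          = cnt ((gsr f).selSet A) n + (if K ∈ A then 1 else 0) := by
        rw [cnt_succ, if_congr hmem_g rfl rfl]
      have hstep : ffrom f ((gsr f).hist A (n + 1))
          = stepP f (f.hist B m) (K, decide (K ∈ A)) := by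
        rw [hist_g, ffrom_concat, hfe]
      by_cases hc : d' / 2 = K
      · -- two f-steps consumed
        have hmem_f' : m + 1 ∈ f.selSet B ↔ K ∈ A := by
          show d' ∈ oplus A ↔ K ∈ A
          rw [mem_oplus, hc]
        have hbb : decide (d ∈ B) = decide (d' ∈ B) := by
          simp only [hB, mem_oplus, hdK, hc]
        have hist_f2 : f.hist B (m + 2) = f.hist B (m + 1) ++ [(d', decide (d' ∈ B))] := rfl
        have hmain : ffrom f ((gsr f).hist A (n + 1)) = f.hist B (m + 2) := by
          rw [hstep]
          simp only [stepP, ← hd]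
          rw [hbit, ← hist_f1, ← hd', if_pos hc, hbb, ← hist_f2]
        have hlast : d' = 2 * K + 1 := by omega
        have hfd : f.next (f.hist B (m + 2)) > d' := f_incr f B (m + 1)
        have hge : K + 1 ≤ f.next (f.hist B (m + 2)) / 2 := by omega
        refine ⟨m + 2, hmain, by omega, by omega, ?_, ?_⟩
        · rw [hgc, cnt_succ, cnt_succ, if_congr hmem_f rfl rfl, if_congr hmem_f' rfl rfl]
          split <;> omega
        · simp only [gnext, hrail, hmain]
          exact max_eq_left hge
      · have hge : K + 1 ≤ d' / 2 := by omega
        have hmain : ffrom f ((gsr f).hist A (n + 1)) = f.hist B (m + 1) := by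
          rw [hstep]
          simp only [stepP, ← hd]
          rw [hbit, ← hist_f1, ← hd', if_neg hc]
        refine ⟨m + 1, hmain, by omega, by omega, ?_, ?_⟩
        · rw [hgc, cnt_succ, if_congr hmem_f rfl rfl]
          split <;> omega
        · simp only [gnext, hrail, hmain, ← hd']
          exact max_eq_left hge

/-! ### Computability of the simulated rule -/

lemma natrec_shift {β : Type*} (G : ℕ → β → β) (b : β) : ∀ n : ℕ,
    (Nat.rec b (fun i IH => G i IH) (n + 1) : β)
      = Nat.rec (G 0 b) (fun i IH => G (i + 1) IH) n := by
  intro n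
  induction n with
  | zero => rfl
  | succ n ih =>
      show G (n + 1) (Nat.rec b (fun i IH => G i IH) (n + 1)) = _
      rw [ih]

lemma natrec_foldl {α β : Type*} (F : β → α → β) (dflt : α) :
    ∀ (l : List α) (b : β),
      (Nat.rec b (fun i IH => F IH ((l[i]?).getD dflt)) l.length : β) = l.foldl F b := by
  intro l
  induction l with
  | nil => intro b; rfl
  | cons x t ih =>
      intro b
      show (Nat.rec b (fun i IH => F IH (((x :: t)[i]?).getD dflt)) (t.length + 1) : β) = _
      rw [natrec_shift (fun i IH => F IH (((x :: t)[i]?).getD dflt)) b t.length]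
      simp only [List.getElem?_cons_succ, List.getElem?_cons_zero, Option.getD_some]
      rw [ih (F b x)]
      rfl

lemma computable_div2 : Computable (fun n : ℕ => n / 2) :=
  (Primrec.nat_div.comp .id (.const 2)).to_comp

lemma stepP_computable {f : SkipRule} (hf : Computable f.next) :
    Computable₂ (stepP f) := by
  have ht1 : Computable (fun x : List (ℕ × Bool) × (ℕ × Bool) => x.1 ++ [(f.next x.1, x.2.2)]) :=
    Computable.list_concat.comp .fst ((hf.comp .fst).pair (Computable.snd.comp .snd))
  have ht2 : Computable (fun x : List (ℕ × Bool) × (ℕ × Bool) =>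
      (x.1 ++ [(f.next x.1, x.2.2)]) ++ [(f.next (x.1 ++ [(f.next x.1, x.2.2)]), x.2.2)]) :=
    Computable.list_concat.comp ht1 ((hf.comp ht1).pair (Computable.snd.comp .snd))
  have hcnd : Computable (fun x : List (ℕ × Bool) × (ℕ × Bool) =>
      decide (f.next (x.1 ++ [(f.next x.1, x.2.2)]) / 2 = x.2.1)) :=
    Primrec.eq.decide.to_comp.comp (computable_div2.comp (hf.comp ht1)) (Computable.fst.comp .snd)
  have := Computable.cond hcnd ht2 ht1
  refine this.of_eq fun x => ?_
  simp [stepP, Bool.cond_decide]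

lemma ffrom_computable {f : SkipRule} (hf : Computable f.next) :
    Computable (ffrom f) := by
  have h : Computable₂ (fun (σ : List (ℕ × Bool)) (q : ℕ × List (ℕ × Bool)) =>
      stepP f q.2 ((σ[q.1]?).getD ((0 : ℕ), false))) :=
    (stepP_computable hf).comp (Computable.snd.comp .snd)
      (Computable.option_getD
        (Computable.list_getElem?.comp .fst (Computable.fst.comp .snd))
        (.const ((0 : ℕ), false)))
  have := Computable.nat_rec Computable.list_length (Computable.const ([] : List (ℕ × Bool))) h
  exact this.of_eq fun σ => natrec_foldl (stepP f) ((0 : ℕ), false) σ ([] : List (ℕ × Bool))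

lemma rail_computable : Computable rail := by
  have h1 : Computable (fun σ : List (ℕ × Bool) => σ[σ.length - 1]?) :=
    Computable.list_getElem?.comp .id (Computable.pred.comp Computable.list_length)
  have h2 : Computable
      (fun σ : List (ℕ × Bool) => (σ[σ.length - 1]?).map (fun p => p.1 + 1)) :=
    Computable.option_map h1 ((Computable.succ.comp (Computable.fst.comp .snd)).to₂)
  exact Computable.option_getD h2 (.const 0)

lemma gnext_computable {f : SkipRule} (hf : Computable f.next) :
    Computable (gnext f) :=
  Primrec.nat_max.to_comp.comp
    (computable_div2.comp (hf.comp (ffrom_computable hf))) rail_computable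

/-! ### The limsup comparison -/

theorem limsup_bound (u v : ℕ → ℝ) (m : ℕ → ℕ)
    (hu0 : ∀ M, 0 ≤ u M) (hu1 : ∀ M, u M ≤ 1) (hv1 : ∀ n, v n ≤ 1)
    (hm2 : ∀ n, n ≤ m n) (hm3 : ∀ n, m n ≤ 2 * n)
    (hkey : ∀ M n, 1 ≤ M → 1 ≤ n → n ≤ M → M ≤ m n → u M ≤ 2 * v n) :
    limsup u atTop ≤ 2 * limsup v atTop := by
  have hm0 : m 0 = 0 := Nat.le_zero.mp (by simpa using hm3 0)
  have hex : ∀ M : ℕ, ∃ n, M ≤ m n := fun M => ⟨M, hm2 M⟩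
  set nn : ℕ → ℕ := fun M => Nat.find (hex M) with hnn
  have hnn1 : ∀ M, M ≤ m (nn M) := fun M => Nat.find_spec (hex M)
  have hnnM : ∀ M, nn M ≤ M := by
    intro M
    rcases Nat.eq_zero_or_pos (nn M) with h | h
    · omega
    · have h2 := Nat.find_min (hex M) (show nn M - 1 < nn M by omega)
      have := hm2 (nn M - 1)
      omega
  have hpos : ∀ M, 1 ≤ M → 1 ≤ nn M := by
    intro M hM
    by_contra h
    have h0 : nn M = 0 := by omega
    have := hnn1 M
    rw [h0, hm0] at this
    omega
  have htend : Tendsto nn atTop atTop := by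
    refine tendsto_atTop.2 fun b => eventually_atTop.2 ⟨2 * b, fun M hM => ?_⟩
    have h1 := hnn1 M
    have h2 := hm3 (nn M)
    omega
  have hvb : IsBoundedUnder (· ≤ ·) atTop v := isBoundedUnder_of ⟨1, hv1⟩
  have hucb : IsCoboundedUnder (· ≤ ·) atTop u := isCoboundedUnder_le_of_le atTop hu0
  have hL : ∀ ε : ℝ, 0 < ε → limsup u atTop ≤ 2 * limsup v atTop + ε := by
    intro ε hε
    set L := limsup v atTop with hLdef
    have hev : ∀ᶠ n in atTop, v n < L + ε / 2 :=
      eventually_lt_of_limsup_lt (by linarith) hvb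
    have hev2 : ∀ᶠ M in atTop, v (nn M) < L + ε / 2 := htend.eventually hev
    have hev3 : ∀ᶠ M in atTop, u M ≤ 2 * L + ε := by
      filter_upwards [hev2, eventually_ge_atTop 1] with M h1 h2
      have hk := hkey M (nn M) h2 (hpos M h2) (hnnM M) (hnn1 M)
      linarith
    exact limsup_le_of_le hucb hev3
  exact le_of_forall_pos_le_add hL

theorem dens_bound (A : Set ℕ) (f : SkipRule) :
    limsup (dens (f.selSet (oplus A))) atTop
      ≤ 2 * limsup (dens ((gsr f).selSet A)) atTop := by
  choose m hm1 hm2 hm3 hm4 hm5 using key f A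
  refine limsup_bound _ _ m (fun M => dens_nonneg _ _) (fun M => dens_le_one _ _)
    (fun n => dens_le_one _ _) hm2 hm3 ?_
  intro M n hM hn hnM hMm
  have h1 : cnt (f.selSet (oplus A)) M ≤ 2 * cnt ((gsr f).selSet A) n :=
    le_trans (cnt_mono _ hMm) (hm4 n)
  have hMpos : (0 : ℝ) < M := by exact_mod_cast hM
  have hnpos : (0 : ℝ) < n := by exact_mod_cast hn
  have hnM' : (n : ℝ) ≤ M := by exact_mod_cast hnM
  unfold dens
  calc (cnt (f.selSet (oplus A)) M : ℝ) / M
      ≤ ((2 * cnt ((gsr f).selSet A) n : ℕ) : ℝ) / M := by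
        gcongr
        all_goals exact_mod_cast h1
    _ ≤ ((2 * cnt ((gsr f).selSet A) n : ℕ) : ℝ) / n := by
        gcongr
    _ = 2 * ((cnt ((gsr f).selSet A) n : ℝ) / n) := by
        push_cast
        ring

theorem stmt10 :
    (∀ (A : Set ℕ) (f : SkipRule), Computable f.next →
        0 < limsup (dens (f.selSet (oplus A))) atTop →
        ∃ g : SkipRule, Computable g.next ∧
          limsup (dens (f.selSet (oplus A))) atTop / 2 ≤
            limsup (dens (g.selSet A)) atTop) ∧
    ∀ A : Set ℕ, WeaklyStochastic0 A → WeaklyStochastic0 (oplus A) := by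
  constructor
  · intro A f hf _
    refine ⟨gsr f, gnext_computable hf, ?_⟩
    have := dens_bound A f
    linarith
  · intro A hA R hR
    set u := dens (R.selSet (oplus A)) with hu
    have hb1 : IsBoundedUnder (· ≤ ·) atTop u := isBoundedUnder_of ⟨1, fun n => dens_le_one _ _⟩
    have hb2 : IsBoundedUnder (· ≥ ·) atTop u := isBoundedUnder_of ⟨0, fun n => dens_nonneg _ _⟩
    have hg := hA (gsr R) (gnext_computable hR)
    have hgl : limsup (dens ((gsr R).selSet A)) atTop = 0 := hg.limsup_eq
    have hsup : limsup u atTop ≤ 0 := by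
      have := dens_bound A R
      rw [hgl] at this
      linarith
    have hinf : (0 : ℝ) ≤ liminf u atTop :=
      le_liminf_of_le (isCoboundedUnder_ge_of_le atTop fun n => dens_le_one _ _)
        (Eventually.of_forall fun n => dens_nonneg _ _)
    have hls : liminf u atTop ≤ limsup u atTop := liminf_le_limsup hb1 hb2
    have h1 : limsup u atTop = 0 := le_antisymm hsup (by linarith)
    have h2 : liminf u atTop = 0 := le_antisymm (by linarith) hinf
    exact tendsto_of_liminf_eq_limsup h2 h1 hb1 hb2
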